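/- If n, m, k, l are positive integers with √n + √m = √k + √l, then n + m + k + l is an even number. -/

import Mathlib

open Real

theorem even_sum_of_sqrt_eq (n m k l : ℕ) (hn : 0 < n) (hm : 0 < m)
    (hk : 0 < k) (hl : 0 < l)
    (h : Real.sqrt n + Real.sqrt m = Real.sqrt k + Real.sqrt l) :
    Even (n + m + k + l) := by
  set A : ℝ := Real.sqrt ((n : ℝ) * m) with hA
  set B : ℝ := Real.sqrt ((k : ℝ) * l) with hB
  have hA0 : 0 ≤ A := Real.sqrt_nonneg _
  have hB0 : 0 ≤ B := Real.sqrt_nonneg _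
  have hA2 : A ^ 2 = (n : ℝ) * m := Real.sq_sqrt (by positivity)
  have hB2 : B ^ 2 = (k : ℝ) * l := Real.sq_sqrt (by positivity)
  have e1 : ((n : ℝ) + m) + 2 * A = ((k : ℝ) + l) + 2 * B := by
    have h2 : (Real.sqrt n + Real.sqrt m) ^ 2 = (Real.sqrt k + Real.sqrt l) ^ 2 := by
      rw [h]
    rw [add_sq, add_sq, Real.sq_sqrt (by positivity), Real.sq_sqrt (by positivity),
      Real.sq_sqrt (by positivity), Real.sq_sqrt (by positivity)] at h2
    rw [hA, hB, Real.sqrt_mul (by positivity), Real.sqrt_mul (by positivity)]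
    linarith
  by_cases hc : n * m = k * l
  · have hAB : A = B := by
      rw [hA, hB]
      congr 1
      exact_mod_cast congrArg (Nat.cast (R := ℝ)) hc
    have : (n : ℝ) + m = (k : ℝ) + l := by
      rw [hAB] at e1; linarith
    have hh : n + m = k + l := by exact_mod_cast this
    rw [Nat.even_iff]; omega
  · have hne : A ≠ B := by
      intro hq
      apply hc
      rw [hA, hB, Real.sqrt_inj (by positivity) (by positivity)] at hq
      exact_mod_cast hq
    set c : ℤ := (n : ℤ) + m - k - l with hcdef
    have hdiff : B - A = (c : ℝ) / 2 := by rw [hcdef]; push_cast; linarith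
    have hc0 : c ≠ 0 := by
      intro h0
      rw [h0] at hdiff
      simp at hdiff
      exact hne (by linarith)
    have hcR : ((c : ℝ) / 2) ≠ 0 := by
      simp only [div_ne_zero_iff]
      exact ⟨Int.cast_ne_zero.mpr hc0, two_ne_zero⟩
    have hsum : B + A = (((k : ℤ) * l - (n : ℤ) * m : ℤ) : ℝ) / ((c : ℝ) / 2) := by
      rw [eq_div_iff hcR, ← hdiff]
      push_cast
      nlinarith [hA2, hB2]
    have hr : ¬ Irrational B := by
      intro hirr
      apply hirr
      refine ⟨((((k : ℤ) * l - (n : ℤ) * m : ℤ) : ℚ) / ((c : ℚ) / 2) + (c : ℚ) / 2) / 2, ?_⟩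
      have hB' : B = ((((k : ℤ) * l - (n : ℤ) * m : ℤ) : ℝ) / ((c : ℝ) / 2) + (c : ℝ) / 2) / 2 := by
        rw [← hsum, ← hdiff]; ring
      rw [hB']
      push_cast
      ring
    have hr2 : ¬ Irrational A := by
      intro hirr
      apply hr
      have hBe : B = A + (c : ℝ) / 2 := by linarith
      rw [hBe]
      have := Irrational.add_ratCast (q := (c : ℚ) / 2) hirr
      convert this using 2
      push_cast
      ring
    have hAn : A = Real.sqrt ((n * m : ℕ)) := by rw [hA]; push_cast; ring_nf
    have hBn : B = Real.sqrt ((k * l : ℕ)) := by rw [hB]; push_cast; ring_nf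
    rw [hBn, irrational_sqrt_natCast_iff, not_not] at hr
    rw [hAn, irrational_sqrt_natCast_iff, not_not] at hr2
    obtain ⟨a, ha⟩ := hr
    obtain ⟨b, hb⟩ := hr2
    have hsa : B = a := by
      rw [hBn, ha]; push_cast; rw [Real.sqrt_mul_self (by positivity)]
    have hsb : A = b := by
      rw [hAn, hb]; push_cast; rw [Real.sqrt_mul_self (by positivity)]
    rw [hsa, hsb] at e1
    have hnat : n + m + 2 * b = k + l + 2 * a := by exact_mod_cast e1
    rw [Nat.even_iff]; omega
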